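/- For every triangle T ⊆ ℝ² (the convex hull of three affinely independent points), i(T,R(T)) = ∞: no finite family of unit vectors r_1,…,r_m ∈ S^1 satisfies that every x ∈ T has x + R(T)·r_i ∈ T for some i. -/

import Mathlib

open Metric Set
open scoped RealInnerProductSpace

/-- The quantified t-illumination number `i(K,ε)`: the least `m` for which there exist
unit vectors `r_1, …, r_m` such that every `x ∈ K` satisfies `x + ε • r_i ∈ K` for some `i`;
`∞` if no finite such family exists. -/
noncomputable def iq {n : ℕ} (K : Set (EuclideanSpace ℝ (Fin n))) (ε : ℝ) : ℕ∞ :=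
  sInf {m : ℕ∞ | ∃ s : Finset (EuclideanSpace ℝ (Fin n)), (s.card : ℕ∞) = m ∧
    (∀ r ∈ s, ‖r‖ = 1) ∧ ∀ x ∈ K, ∃ r ∈ s, x + ε • r ∈ K}

/-- The quantified illumination number `c(K,ε)`: the least `m` for which there exist
unit vectors `r_1, …, r_m` such that every `x ∈ K` satisfies `x + ε • r_i ∈ int K` for some `i`;
`∞` if no finite such family exists. -/
noncomputable def cq {n : ℕ} (K : Set (EuclideanSpace ℝ (Fin n))) (ε : ℝ) : ℕ∞ :=
  sInf {m : ℕ∞ | ∃ s : Finset (EuclideanSpace ℝ (Fin n)), (s.card : ℕ∞) = m ∧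
    (∀ r ∈ s, ‖r‖ = 1) ∧ ∀ x ∈ K, ∃ r ∈ s, x + ε • r ∈ interior K}

/-- `B(c, R)` is the circumball of `K`: a closed ball containing `K` of minimal radius. -/
def IsCircumball {n : ℕ} (K : Set (EuclideanSpace ℝ (Fin n)))
    (c : EuclideanSpace ℝ (Fin n)) (R : ℝ) : Prop :=
  K ⊆ closedBall c R ∧ ∀ (c' : EuclideanSpace ℝ (Fin n)) (R' : ℝ), K ⊆ closedBall c' R' → R ≤ R'

section aux
variable {E : Type*} [NormedAddCommGroup E] [InnerProductSpace ℝ E]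

private lemma hull3_mem {a b c : E} (hab : a ≠ b) (hac : a ≠ c) (hbc : b ≠ c) {x : E} :
    x ∈ convexHull ℝ ({a, b, c} : Set E) ↔
      ∃ l1 l2 l3 : ℝ, 0 ≤ l1 ∧ 0 ≤ l2 ∧ 0 ≤ l3 ∧ l1 + l2 + l3 = 1 ∧
        l1 • a + l2 • b + l3 • c = x := by
  classical
  have hcoe : (({a, b, c} : Finset E) : Set E) = ({a, b, c} : Set E) := by simp
  have hanotin : a ∉ ({b, c} : Finset E) := by
    intro h
    rcases Finset.mem_insert.1 h with h | h
    · exact hab h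
    · exact hac (Finset.mem_singleton.1 h)
  have hbnotin : b ∉ ({c} : Finset E) := by
    intro h; exact hbc (Finset.mem_singleton.1 h)
  rw [← hcoe, Finset.convexHull_eq]
  constructor
  · rintro ⟨w, hw0, hw1, hwx⟩
    refine ⟨w a, w b, w c, hw0 a (by simp), hw0 b (by simp), hw0 c (by simp), ?_, ?_⟩
    · rw [Finset.sum_insert hanotin, Finset.sum_insert hbnotin, Finset.sum_singleton] at hw1
      linarith
    · rw [Finset.centerMass_eq_of_sum_1 _ _ hw1] at hwx
      rw [Finset.sum_insert hanotin, Finset.sum_insert hbnotin, Finset.sum_singleton] at hwx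
      simp only [id] at hwx
      rw [← hwx]; abel
  · rintro ⟨l1, l2, l3, h1, h2, h3, hs, hx⟩
    refine ⟨fun y => if y = a then l1 else if y = b then l2 else l3, ?_, ?_, ?_⟩
    · intro y _; dsimp only; split_ifs <;> assumption
    · rw [Finset.sum_insert hanotin, Finset.sum_insert hbnotin, Finset.sum_singleton]
      simp [hab.symm, hac.symm, hbc.symm]
      linarith
    · have hw1 : ∑ y ∈ ({a, b, c} : Finset E),
          (fun y => if y = a then l1 else if y = b then l2 else l3) y = 1 := by
        rw [Finset.sum_insert hanotin, Finset.sum_insert hbnotin, Finset.sum_singleton]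
        simp [hab.symm, hac.symm, hbc.symm]
        linarith
      rw [Finset.centerMass_eq_of_sum_1 _ _ hw1]
      rw [Finset.sum_insert hanotin, Finset.sum_insert hbnotin, Finset.sum_singleton]
      simp [hab.symm, hac.symm, hbc.symm]
      rw [← hx]; abel

private lemma key_dir {a b c cc : E} {R : ℝ} (hR : 0 < R) {T : Set E}
    (hND : ∀ x y z : ℝ, x + y + z = 0 → x • a + y • b + z • c = 0 → x = 0 ∧ y = 0 ∧ z = 0)
    (hab : a ≠ b) (hac : a ≠ c) (hbc : b ≠ c)
    (hT : T = convexHull ℝ ({a, b, c} : Set E))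
    (hball : T ⊆ closedBall cc R)
    (hsph : ∀ v ∈ T, ‖v - cc‖ = R → v = a ∨ v = b ∨ v = c)
    {α β γ : ℝ} (hα : 0 < α) (hβ : 0 < β) (hγ : 0 ≤ γ) (hsum : α + β + γ = 1)
    (hcomb : α • a + β • b + γ • c = cc) :
    ∃ d : E, (∀ t : ℝ, 0 ≤ t → t ≤ 1 → cc + t • d ∈ T) ∧
      ∀ v ∈ T, ‖v - cc‖ = R → ∀ t : ℝ, 0 < t → v + t • d ∉ T := by
  refine ⟨c - cc, ?_, ?_⟩
  · intro t ht0 ht1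
    rw [hT, hull3_mem hab hac hbc]
    refine ⟨(1-t)*α, (1-t)*β, (1-t)*γ + t, by nlinarith, by nlinarith, by nlinarith, ?_, ?_⟩
    · have h : t*α + t*β + t*γ = t := by
        rw [← mul_add, ← mul_add, hsum, mul_one]
      ring_nf
      ring_nf at h
      linarith [hsum]
    · rw [← hcomb]
      module
  · intro v hvT hvR t ht hmem
    rcases hsph v hvT hvR with h | h | h
    · rw [h] at hmem
      rw [hT, hull3_mem hab hac hbc] at hmem
      obtain ⟨l1, l2, l3, h1, h2, h3, hs, hx⟩ := hmem
      rw [← hcomb] at hx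
      have h0 : (l1 - 1 + t*α) • a + (l2 + t*β) • b + (l3 - t + t*γ) • c = 0 := by
        have h := sub_eq_zero_of_eq hx
        rw [← h]; module
      have hsz : (l1 - 1 + t*α) + (l2 + t*β) + (l3 - t + t*γ) = 0 := by
        have h : t*α + t*β + t*γ = t := by rw [← mul_add, ← mul_add, hsum, mul_one]
        linarith
      obtain ⟨-, hq, -⟩ := hND _ _ _ hsz h0
      nlinarith [mul_pos ht hβ]
    · rw [h] at hmem
      rw [hT, hull3_mem hab hac hbc] at hmem
      obtain ⟨l1, l2, l3, h1, h2, h3, hs, hx⟩ := hmem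
      rw [← hcomb] at hx
      have h0 : (l1 + t*α) • a + (l2 - 1 + t*β) • b + (l3 - t + t*γ) • c = 0 := by
        have h := sub_eq_zero_of_eq hx
        rw [← h]; module
      have hsz : (l1 + t*α) + (l2 - 1 + t*β) + (l3 - t + t*γ) = 0 := by
        have h : t*α + t*β + t*γ = t := by rw [← mul_add, ← mul_add, hsum, mul_one]
        linarith
      obtain ⟨hp, -, -⟩ := hND _ _ _ hsz h0
      nlinarith [mul_pos ht hα]
    · rw [h] at hmem hvR
      have hb2 := hball hmem
      rw [mem_closedBall, dist_eq_norm] at hb2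
      have he : c + t • (c - cc) - cc = (1 + t) • (c - cc) := by module
      rw [he, norm_smul, Real.norm_eq_abs, abs_of_pos (by linarith), hvR] at hb2
      nlinarith

private lemma sphere_classify {a b c cc : E} {R : ℝ} (hR : 0 < R)
    (hab : a ≠ b) (hac : a ≠ c) (hbc : b ≠ c) {T : Set E}
    (hT : T = convexHull ℝ ({a, b, c} : Set E))
    (hball : T ⊆ closedBall cc R) :
    ∀ x ∈ T, ‖x - cc‖ = R → x = a ∨ x = b ∨ x = c := by
  intro x hxT hxR
  obtain ⟨l1, l2, l3, h1, h2, h3, hs, hx⟩ := (hull3_mem hab hac hbc).1 (hT ▸ hxT)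
  have haT : a ∈ T := hT ▸ subset_convexHull ℝ _ (by simp)
  have hbT : b ∈ T := hT ▸ subset_convexHull ℝ _ (by simp)
  have hcT : c ∈ T := hT ▸ subset_convexHull ℝ _ (by simp)
  have hval : l1 • (a - cc) + l2 • (b - cc) + l3 • (c - cc) = x - cc := by
    have h' : l1 • (a - cc) + l2 • (b - cc) + l3 • (c - cc)
        = (l1 • a + l2 • b + l3 • c) - (l1 + l2 + l3) • cc := by module
    rw [h', hs, one_smul, hx]
  have bnd : ∀ v ∈ T, ⟪x - cc, v - cc⟫ ≤ R ^ 2 := by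
    intro v hv
    have h1' : ⟪x - cc, v - cc⟫ ≤ ‖x - cc‖ * ‖v - cc‖ := real_inner_le_norm _ _
    have h2' : ‖v - cc‖ ≤ R := by
      have := hball hv; rwa [mem_closedBall, dist_eq_norm] at this
    calc ⟪x - cc, v - cc⟫ ≤ ‖x - cc‖ * ‖v - cc‖ := h1'
      _ ≤ R * R := by rw [hxR]; exact mul_le_mul_of_nonneg_left h2' hR.le
      _ = R ^ 2 := by ring
  have step : ∀ v : E, v ∈ T → ⟪x - cc, v - cc⟫ = R ^ 2 → x = v := by
    intro v hv hiv
    have h2' : ‖v - cc‖ ≤ R := by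
      have := hball hv; rwa [mem_closedBall, dist_eq_norm] at this
    have hveq : ‖v - cc‖ = R := by
      by_contra hne
      have hlt : ‖v - cc‖ < R := lt_of_le_of_ne h2' hne
      have : ⟪x - cc, v - cc⟫ < R ^ 2 := by
        calc ⟪x - cc, v - cc⟫ ≤ ‖x - cc‖ * ‖v - cc‖ := real_inner_le_norm _ _
          _ < R * R := by rw [hxR]; exact mul_lt_mul_of_pos_left hlt hR
          _ = R ^ 2 := by ring
      linarith [this, hiv.ge]
    have heq : ⟪x - cc, v - cc⟫ = ‖x - cc‖ * ‖v - cc‖ := by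
      rw [hxR, hveq]; rw [hiv]; ring
    have := inner_eq_norm_mul_iff_real.1 heq
    rw [hxR, hveq] at this
    have hxv : x - cc = v - cc := smul_right_injective E (ne_of_gt hR) this
    exact sub_left_injective hxv
  have hR2 : l1 * ⟪x - cc, a - cc⟫ + l2 * ⟪x - cc, b - cc⟫ + l3 * ⟪x - cc, c - cc⟫
      = R ^ 2 := by
    rw [← real_inner_smul_right, ← real_inner_smul_right, ← real_inner_smul_right,
      ← inner_add_right, ← inner_add_right, hval, real_inner_self_eq_norm_sq, hxR]
  have hzero : l1 * (R ^ 2 - ⟪x - cc, a - cc⟫) + l2 * (R ^ 2 - ⟪x - cc, b - cc⟫)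
      + l3 * (R ^ 2 - ⟪x - cc, c - cc⟫) = 0 := by
    have : (l1 + l2 + l3) * R ^ 2 = R ^ 2 := by rw [hs, one_mul]
    nlinarith [hR2, this]
  have hpos : 0 < l1 ∨ 0 < l2 ∨ 0 < l3 := by
    by_contra hcon
    push_neg at hcon
    obtain ⟨c1, c2, c3⟩ := hcon
    linarith
  have na := mul_nonneg h1 (sub_nonneg.2 (bnd a haT))
  have nb := mul_nonneg h2 (sub_nonneg.2 (bnd b hbT))
  have nc := mul_nonneg h3 (sub_nonneg.2 (bnd c hcT))
  rcases hpos with hp | hp | hp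
  · left
    refine step a haT ?_
    have : l1 * (R ^ 2 - ⟪x - cc, a - cc⟫) = 0 := by linarith
    have := (mul_eq_zero.1 this).resolve_left (ne_of_gt hp)
    linarith
  · right; left
    refine step b hbT ?_
    have : l2 * (R ^ 2 - ⟪x - cc, b - cc⟫) = 0 := by linarith
    have := (mul_eq_zero.1 this).resolve_left (ne_of_gt hp)
    linarith
  · right; right
    refine step c hcT ?_
    have : l3 * (R ^ 2 - ⟪x - cc, c - cc⟫) = 0 := by linarith
    have := (mul_eq_zero.1 this).resolve_left (ne_of_gt hp)
    linarith

private lemma circum_mem_hull [CompleteSpace E] {a b c cc : E} {R : ℝ} (hR : 0 < R)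
    {T : Set E} (hT : T = convexHull ℝ ({a, b, c} : Set E))
    (hball : T ⊆ closedBall cc R)
    (hmin : ∀ (c' : E) (R' : ℝ), T ⊆ closedBall c' R' → R ≤ R') :
    cc ∈ convexHull ℝ {v : E | (v = a ∨ v = b ∨ v = c) ∧ ‖v - cc‖ = R} := by
  have hmem3 : ∀ v, (v = a ∨ v = b ∨ v = c) → v ∈ T := by
    intro v hv
    rw [hT]
    apply subset_convexHull
    rcases hv with rfl | rfl | rfl <;> simp
  have hsep : ∀ u : E, ∃ v, (v = a ∨ v = b ∨ v = c) ∧ ‖v - cc‖ = R ∧ ⟪u, v - cc⟫ ≤ 0 := by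
    intro u
    by_contra hcon
    push_neg at hcon
    have key : ∀ v, (v = a ∨ v = b ∨ v = c) →
        ∃ ε, 0 < ε ∧ ∀ δ : ℝ, 0 < δ → δ ≤ ε → dist v (cc + δ • u) < R := by
      intro v hv
      have hvT := hmem3 v hv
      have hvb : ‖v - cc‖ ≤ R := by
        have := hball hvT; rwa [mem_closedBall, dist_eq_norm] at this
      by_cases hvR : ‖v - cc‖ = R
      · have hip := hcon v hv hvR
        refine ⟨⟪u, v - cc⟫ / (‖u‖ ^ 2 + 1), by positivity, fun δ hδ0 hδle => ?_⟩
        have hvar : v - (cc + δ • u) = (v - cc) - δ • u := by abel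
        have hd : dist v (cc + δ • u) ^ 2
            = ‖v - cc‖ ^ 2 - 2 * δ * ⟪u, v - cc⟫ + δ ^ 2 * ‖u‖ ^ 2 := by
          rw [dist_eq_norm, hvar, norm_sub_sq_real, real_inner_smul_right, real_inner_comm,
            norm_smul, Real.norm_eq_abs, mul_pow, sq_abs]
          ring
        have hδb : δ * (‖u‖ ^ 2 + 1) ≤ ⟪u, v - cc⟫ := (le_div_iff₀ (by positivity)).1 hδle
        have hlt : dist v (cc + δ • u) ^ 2 < R ^ 2 := by
          rw [hd, hvR]
          nlinarith [hδ0, hip]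
        exact lt_of_pow_lt_pow_left₀ 2 hR.le hlt
      · have hvlt : ‖v - cc‖ < R := lt_of_le_of_ne hvb hvR
        refine ⟨(R - ‖v - cc‖) / (‖u‖ + 1),
          div_pos (by linarith) (by positivity), fun δ hδ0 hδle => ?_⟩
        have hvar : v - (cc + δ • u) = (v - cc) - δ • u := by abel
        have h1 : dist v (cc + δ • u) ≤ ‖v - cc‖ + δ * ‖u‖ := by
          rw [dist_eq_norm, hvar]
          calc ‖(v - cc) - δ • u‖ ≤ ‖v - cc‖ + ‖δ • u‖ := norm_sub_le _ _
            _ = ‖v - cc‖ + δ * ‖u‖ := by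
                rw [norm_smul, Real.norm_eq_abs, abs_of_pos hδ0]
        have hb2 : δ * (‖u‖ + 1) ≤ R - ‖v - cc‖ := (le_div_iff₀ (by positivity)).1 hδle
        nlinarith [norm_nonneg u, hδ0]
    obtain ⟨εa, hεa1, hεa2⟩ := key a (Or.inl rfl)
    obtain ⟨εb, hεb1, hεb2⟩ := key b (Or.inr (Or.inl rfl))
    obtain ⟨εc, hεc1, hεc2⟩ := key c (Or.inr (Or.inr rfl))
    set δ := min εa (min εb εc) with hδdef
    have hδpos : 0 < δ := lt_min hεa1 (lt_min hεb1 hεc1)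
    have hda := hεa2 δ hδpos (min_le_left _ _)
    have hdb := hεb2 δ hδpos (le_trans (min_le_right _ _) (min_le_left _ _))
    have hdc := hεc2 δ hδpos (le_trans (min_le_right _ _) (min_le_right _ _))
    set cc' := cc + δ • u with hcc'
    set R' := max (dist a cc') (max (dist b cc') (dist c cc')) with hR'
    have hsub : T ⊆ closedBall cc' R' := by
      rw [hT]
      refine convexHull_min ?_ (convex_closedBall _ _)
      intro v hv
      simp only [Set.mem_insert_iff, Set.mem_singleton_iff] at hv
      rw [mem_closedBall]
      rcases hv with rfl | rfl | rfl
      · exact le_max_left _ _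
      · exact le_trans (le_max_left _ _) (le_max_right _ _)
      · exact le_trans (le_max_right _ _) (le_max_right _ _)
    have h1 := hmin cc' R' hsub
    have h2 : R' < R := max_lt hda (max_lt hdb hdc)
    linarith
  by_contra hcc
  set C := {v : E | (v = a ∨ v = b ∨ v = c) ∧ ‖v - cc‖ = R} with hCdef
  have hCsub : C ⊆ ({a, b, c} : Set E) := by
    intro v hv
    rcases hv.1 with rfl | rfl | rfl <;> simp
  have hCfin : C.Finite :=
    (((Set.finite_singleton c).insert b).insert a).subset hCsub
  obtain ⟨f, u0, hfu, huf⟩ := geometric_hahn_banach_closed_point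
    (convex_convexHull ℝ _) (hCfin.isClosed_convexHull (𝕜 := ℝ)) hcc
  set y := (InnerProductSpace.toDual ℝ E).symm f with hy
  obtain ⟨v, hv, hvR, hip⟩ := hsep (-y)
  have hvhull : v ∈ convexHull ℝ C := subset_convexHull ℝ _ ⟨hv, hvR⟩
  have h1 : f v < u0 := hfu v hvhull
  have h3 : ⟪y, v - cc⟫ = f v - f cc := by
    have h := InnerProductSpace.toDual_symm_apply (𝕜 := ℝ) (E := E) (x := v - cc) (y := f)
    rw [← hy] at h
    rw [h, map_sub]
  have hip' : 0 ≤ ⟪y, v - cc⟫ := by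
    rw [inner_neg_left] at hip
    linarith
  rw [h3] at hip'
  linarith

private lemma unif_eps {X : Type*} (s : Finset X) {Q : X → ℝ → Prop}
    (hmono : ∀ r (ε₁ ε₂ : ℝ), ε₂ ≤ ε₁ → Q r ε₁ → Q r ε₂)
    (h : ∀ r ∈ s, ∃ ε : ℝ, 0 < ε ∧ Q r ε) : ∃ ε : ℝ, 0 < ε ∧ ∀ r ∈ s, Q r ε := by
  classical
  induction s using Finset.induction_on with
  | empty => exact ⟨1, one_pos, fun r hr => absurd hr (Finset.notMem_empty r)⟩
  | @insert x s hx ih =>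
      obtain ⟨ε1, hε1, hq1⟩ := h _ (Finset.mem_insert_self _ _)
      obtain ⟨ε2, hε2, hq2⟩ := ih (fun r hr => h r (Finset.mem_insert_of_mem hr))
      refine ⟨min ε1 ε2, lt_min hε1 hε2, fun r hr => ?_⟩
      rcases Finset.mem_insert.1 hr with rfl | hr
      · exact hmono _ _ _ (min_le_left _ _) hq1
      · exact hmono _ _ _ (min_le_right _ _) (hq2 r hr)

end aux

/-- Example (β): every triangle `T ⊆ ℝ²` satisfies `i(T,R(T)) = ∞`. -/
theorem iq_triangle_at_circumradius_eq_top (a b c : EuclideanSpace ℝ (Fin 2))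
    (habc : AffineIndependent ℝ ![a, b, c])
    (T : Set (EuclideanSpace ℝ (Fin 2))) (hT : T = convexHull ℝ {a, b, c})
    (cc : EuclideanSpace ℝ (Fin 2)) (R : ℝ) (hcirc : IsCircumball T cc R) :
    iq T R = ⊤ := by
  classical
  obtain ⟨hball, hmin⟩ := hcirc
  have hab : a ≠ b := by
    intro h
    have : (0 : Fin 3) = 1 := habc.injective (by simp [h])
    exact absurd this (by decide)
  have hac : a ≠ c := by
    intro h
    have : (0 : Fin 3) = 2 := habc.injective (by simp [h])
    exact absurd this (by decide)
  have hbc : b ≠ c := by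
    intro h
    have : (1 : Fin 3) = 2 := habc.injective (by simp [h])
    exact absurd this (by decide)
  have hND : ∀ x y z : ℝ, x + y + z = 0 → x • a + y • b + z • c = 0 →
      x = 0 ∧ y = 0 ∧ z = 0 := by
    intro x y z hs hv
    have h := affineIndependent_iff.1 habc Finset.univ ![x, y, z]
      (by simp [Fin.sum_univ_three]; linarith)
      (by rw [Fin.sum_univ_three]; simpa using hv)
    refine ⟨?_, ?_, ?_⟩
    · have := h 0 (Finset.mem_univ _); simpa using this
    · have := h 1 (Finset.mem_univ _); simpa using this
    · have := h 2 (Finset.mem_univ _); simpa using this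
  have haT : a ∈ T := hT ▸ subset_convexHull ℝ _ (by simp)
  have hbT : b ∈ T := hT ▸ subset_convexHull ℝ _ (by simp)
  have hR : 0 < R := by
    have h1 : dist a cc ≤ R := hball haT
    have h2 : dist b cc ≤ R := hball hbT
    rcases lt_or_eq_of_le (le_trans dist_nonneg h1) with h | h
    · exact h
    · exfalso
      apply hab
      have ha0 : dist a cc = 0 := le_antisymm (h ▸ h1) dist_nonneg
      have hb0 : dist b cc = 0 := le_antisymm (h ▸ h2) dist_nonneg
      rw [dist_eq_zero] at ha0 hb0
      rw [ha0, hb0]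
  have hsph := sphere_classify hR hab hac hbc hT hball
  have hccC := circum_mem_hull hR hT hball hmin
  -- permuted data
  have hset_acb : ({a, c, b} : Set (EuclideanSpace ℝ (Fin 2))) = {a, b, c} := by
    ext x; simp only [Set.mem_insert_iff, Set.mem_singleton_iff]; tauto
  have hset_bca : ({b, c, a} : Set (EuclideanSpace ℝ (Fin 2))) = {a, b, c} := by
    ext x; simp only [Set.mem_insert_iff, Set.mem_singleton_iff]; tauto
  have hT_acb : T = convexHull ℝ {a, c, b} := by rw [hset_acb]; exact hT
  have hT_bca : T = convexHull ℝ {b, c, a} := by rw [hset_bca]; exact hT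
  have hsph_acb : ∀ v ∈ T, ‖v - cc‖ = R → v = a ∨ v = c ∨ v = b := fun v hv hn => by
    rcases hsph v hv hn with h | h | h <;> tauto
  have hsph_bca : ∀ v ∈ T, ‖v - cc‖ = R → v = b ∨ v = c ∨ v = a := fun v hv hn => by
    rcases hsph v hv hn with h | h | h <;> tauto
  have hND_acb : ∀ x y z : ℝ, x + y + z = 0 → x • a + y • c + z • b = 0 →
      x = 0 ∧ y = 0 ∧ z = 0 := by
    intro x y z h1 h2
    obtain ⟨r1, r2, r3⟩ := hND x z y (by linarith)
      (by rw [show x • a + z • b + y • c = x • a + y • c + z • b from by abel]; exact h2)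
    exact ⟨r1, r3, r2⟩
  have hND_bca : ∀ x y z : ℝ, x + y + z = 0 → x • b + y • c + z • a = 0 →
      x = 0 ∧ y = 0 ∧ z = 0 := by
    intro x y z h1 h2
    obtain ⟨r1, r2, r3⟩ := hND z x y (by linarith)
      (by rw [show z • a + x • b + y • c = x • b + y • c + z • a from by abel]; exact h2)
    exact ⟨r2, r3, r1⟩
  -- the direction d
  obtain ⟨d, hd1, hd2⟩ : ∃ d : EuclideanSpace ℝ (Fin 2),
      (∀ t : ℝ, 0 ≤ t → t ≤ 1 → cc + t • d ∈ T) ∧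
      ∀ v ∈ T, ‖v - cc‖ = R → ∀ t : ℝ, 0 < t → v + t • d ∉ T := by
    by_cases hca : ‖a - cc‖ = R <;> by_cases hcb : ‖b - cc‖ = R <;>
      by_cases hcc2 : ‖c - cc‖ = R
    · -- all three contacts
      have hCsub : {v : EuclideanSpace ℝ (Fin 2) | (v = a ∨ v = b ∨ v = c) ∧ ‖v - cc‖ = R}
          ⊆ ({a, b, c} : Set (EuclideanSpace ℝ (Fin 2))) := by
        intro v hv; rcases hv.1 with rfl | rfl | rfl <;> simp
      obtain ⟨l1, l2, l3, h1, h2, h3, hs, hx⟩ :=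
        (hull3_mem hab hac hbc).1 (convexHull_mono hCsub hccC)
      by_cases p2 : 0 < l2
      · by_cases p3 : 0 < l3
        · exact key_dir hR hND_bca hbc hab.symm hac.symm hT_bca hball hsph_bca p2 p3 h1
            (by linarith) (by rw [← hx]; abel)
        · have l3z : l3 = 0 := le_antisymm (not_lt.1 p3) h3
          by_cases p1 : 0 < l1
          · exact key_dir hR hND hab hac hbc hT hball hsph p1 p2 h3 hs hx
          · exfalso
            have l1z : l1 = 0 := le_antisymm (not_lt.1 p1) h1
            have : b = cc := by
              rw [← hx, l1z, l3z, show l2 = 1 by linarith]; simp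
            rw [this, sub_self, norm_zero] at hcb
            linarith
      · have l2z : l2 = 0 := le_antisymm (not_lt.1 p2) h2
        by_cases p1 : 0 < l1
        · by_cases p3 : 0 < l3
          · exact key_dir hR hND_acb hac hab hbc.symm hT_acb hball hsph_acb p1 p3 h2
              (by linarith) (by rw [← hx]; abel)
          · exfalso
            have l3z : l3 = 0 := le_antisymm (not_lt.1 p3) h3
            have : a = cc := by
              rw [← hx, l2z, l3z, show l1 = 1 by linarith]; simp
            rw [this, sub_self, norm_zero] at hca
            linarith
        · exfalso
          have l1z : l1 = 0 := le_antisymm (not_lt.1 p1) h1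
          have : c = cc := by
            rw [← hx, l1z, l2z, show l3 = 1 by linarith]; simp
          rw [this, sub_self, norm_zero] at hcc2
          linarith
    · -- contacts a, b
      have hCsub : {v : EuclideanSpace ℝ (Fin 2) | (v = a ∨ v = b ∨ v = c) ∧ ‖v - cc‖ = R}
          ⊆ ({a, b} : Set (EuclideanSpace ℝ (Fin 2))) := by
        intro v hv
        rcases hv.1 with rfl | rfl | rfl
        · simp
        · simp
        · exact absurd hv.2 hcc2
      have hseg := convexHull_mono hCsub hccC
      rw [convexHull_pair] at hseg
      obtain ⟨l, m, hl, hm, hlm, heq⟩ := hseg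
      by_cases plp : 0 < l
      · by_cases pmp : 0 < m
        · exact key_dir hR hND hab hac hbc hT hball hsph plp pmp le_rfl (by linarith)
            (by rw [← heq]; module)
        · exfalso
          have : a = cc := by
            rw [← heq, show m = 0 by linarith, show l = 1 by linarith]; simp
          rw [this, sub_self, norm_zero] at hca
          linarith
      · exfalso
        have : b = cc := by
          rw [← heq, show l = 0 by linarith, show m = 1 by linarith]; simp
        rw [this, sub_self, norm_zero] at hcb
        linarith
    · -- contacts a, c
      have hCsub : {v : EuclideanSpace ℝ (Fin 2) | (v = a ∨ v = b ∨ v = c) ∧ ‖v - cc‖ = R}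
          ⊆ ({a, c} : Set (EuclideanSpace ℝ (Fin 2))) := by
        intro v hv
        rcases hv.1 with rfl | rfl | rfl
        · simp
        · exact absurd hv.2 hcb
        · simp
      have hseg := convexHull_mono hCsub hccC
      rw [convexHull_pair] at hseg
      obtain ⟨l, m, hl, hm, hlm, heq⟩ := hseg
      by_cases plp : 0 < l
      · by_cases pmp : 0 < m
        · exact key_dir hR hND_acb hac hab hbc.symm hT_acb hball hsph_acb plp pmp le_rfl
            (by linarith) (by rw [← heq]; module)
        · exfalso
          have : a = cc := by
            rw [← heq, show m = 0 by linarith, show l = 1 by linarith]; simp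
          rw [this, sub_self, norm_zero] at hca
          linarith
      · exfalso
        have : c = cc := by
          rw [← heq, show l = 0 by linarith, show m = 1 by linarith]; simp
        rw [this, sub_self, norm_zero] at hcc2
        linarith
    · -- contact a only
      exfalso
      have hCsub : {v : EuclideanSpace ℝ (Fin 2) | (v = a ∨ v = b ∨ v = c) ∧ ‖v - cc‖ = R}
          ⊆ ({a} : Set (EuclideanSpace ℝ (Fin 2))) := by
        intro v hv
        rcases hv.1 with rfl | rfl | rfl
        · simp
        · exact absurd hv.2 hcb
        · exact absurd hv.2 hcc2
      have := convexHull_mono hCsub hccC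
      rw [convexHull_singleton] at this
      have : a = cc := (Set.mem_singleton_iff.1 this).symm
      rw [this, sub_self, norm_zero] at hca
      linarith
    · -- contacts b, c
      have hCsub : {v : EuclideanSpace ℝ (Fin 2) | (v = a ∨ v = b ∨ v = c) ∧ ‖v - cc‖ = R}
          ⊆ ({b, c} : Set (EuclideanSpace ℝ (Fin 2))) := by
        intro v hv
        rcases hv.1 with rfl | rfl | rfl
        · exact absurd hv.2 hca
        · simp
        · simp
      have hseg := convexHull_mono hCsub hccC
      rw [convexHull_pair] at hseg
      obtain ⟨l, m, hl, hm, hlm, heq⟩ := hseg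
      by_cases plp : 0 < l
      · by_cases pmp : 0 < m
        · exact key_dir hR hND_bca hbc hab.symm hac.symm hT_bca hball hsph_bca plp pmp le_rfl
            (by linarith) (by rw [← heq]; module)
        · exfalso
          have : b = cc := by
            rw [← heq, show m = 0 by linarith, show l = 1 by linarith]; simp
          rw [this, sub_self, norm_zero] at hcb
          linarith
      · exfalso
        have : c = cc := by
          rw [← heq, show l = 0 by linarith, show m = 1 by linarith]; simp
        rw [this, sub_self, norm_zero] at hcc2
        linarith
    · -- contact b only
      exfalso
      have hCsub : {v : EuclideanSpace ℝ (Fin 2) | (v = a ∨ v = b ∨ v = c) ∧ ‖v - cc‖ = R}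
          ⊆ ({b} : Set (EuclideanSpace ℝ (Fin 2))) := by
        intro v hv
        rcases hv.1 with rfl | rfl | rfl
        · exact absurd hv.2 hca
        · simp
        · exact absurd hv.2 hcc2
      have := convexHull_mono hCsub hccC
      rw [convexHull_singleton] at this
      have : b = cc := (Set.mem_singleton_iff.1 this).symm
      rw [this, sub_self, norm_zero] at hcb
      linarith
    · -- contact c only
      exfalso
      have hCsub : {v : EuclideanSpace ℝ (Fin 2) | (v = a ∨ v = b ∨ v = c) ∧ ‖v - cc‖ = R}
          ⊆ ({c} : Set (EuclideanSpace ℝ (Fin 2))) := by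
        intro v hv
        rcases hv.1 with rfl | rfl | rfl
        · exact absurd hv.2 hca
        · exact absurd hv.2 hcb
        · simp
      have := convexHull_mono hCsub hccC
      rw [convexHull_singleton] at this
      have : c = cc := (Set.mem_singleton_iff.1 this).symm
      rw [this, sub_self, norm_zero] at hcc2
      linarith
    · -- no contacts
      exfalso
      have hCsub : {v : EuclideanSpace ℝ (Fin 2) | (v = a ∨ v = b ∨ v = c) ∧ ‖v - cc‖ = R}
          ⊆ (∅ : Set (EuclideanSpace ℝ (Fin 2))) := by
        intro v hv
        rcases hv.1 with rfl | rfl | rfl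
        · exact absurd hv.2 hca
        · exact absurd hv.2 hcb
        · exact absurd hv.2 hcc2
      have := convexHull_mono hCsub hccC
      rw [convexHull_empty] at this
      exact this
  -- final assembly
  have hTclosed : IsClosed T := by
    rw [hT]
    exact (((Set.finite_singleton c).insert b).insert a).isClosed_convexHull (𝕜 := ℝ)
  rw [iq, sInf_eq_top]
  rintro m ⟨s, hcard, hunit, hcov⟩
  exfalso
  have hper : ∀ r ∈ s, ∃ ε : ℝ, 0 < ε ∧
      ∀ t : ℝ, 0 < t → t ≤ ε → cc + t • d + R • r ∉ T := by
    intro r hrs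
    by_cases hmem : cc + R • r ∈ T
    · refine ⟨1, one_pos, fun t ht htle hbad => ?_⟩
      have hnr : ‖cc + R • r - cc‖ = R := by
        rw [add_sub_cancel_left, norm_smul, Real.norm_eq_abs, abs_of_pos hR,
          hunit r hrs, mul_one]
      refine hd2 _ hmem hnr t ht ?_
      rw [show cc + R • r + t • d = cc + t • d + R • r from by abel]
      exact hbad
    · obtain ⟨ε, hε, hballsub⟩ := Metric.isOpen_iff.1 hTclosed.isOpen_compl _ hmem
      refine ⟨ε / (‖d‖ + 1), div_pos hε (by positivity), fun t ht htle hbad => ?_⟩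
      have hdst : dist (cc + t • d + R • r) (cc + R • r) = t * ‖d‖ := by
        rw [dist_eq_norm, show cc + t • d + R • r - (cc + R • r) = t • d from by abel,
          norm_smul, Real.norm_eq_abs, abs_of_pos ht]
      have hmemball : cc + t • d + R • r ∈ ball (cc + R • r) ε := by
        rw [mem_ball, hdst]
        have h2 : t * (‖d‖ + 1) ≤ ε := (le_div_iff₀ (by positivity)).1 htle
        nlinarith [ht]
      exact hballsub hmemball hbad
  obtain ⟨ε0, hε0, hall⟩ := unif_eps s
    (fun r ε₁ ε₂ hle hq t ht htle => hq t ht (le_trans htle hle)) hper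
  have ht0 : (0 : ℝ) < min ε0 1 := lt_min hε0 one_pos
  have hxT : cc + (min ε0 1) • d ∈ T := hd1 _ ht0.le (min_le_right _ _)
  obtain ⟨r, hrs, hbad⟩ := hcov _ hxT
  exact hall r hrs _ ht0 (min_le_left _ _) hbad
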